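/- At a point q = (x₁,y₁,x₂,y₂) ∈ ℝ⁴ with x₁² + y₁² ≠ 0, the two vectors u_q and v_q defined by u_q = c·(−(x₁x₂+y₁y₂), −(x₁y₂−x₂y₁), x₁²+y₁², 0) and v_q = c·((x₁y₂−x₂y₁), −(x₁x₂+y₁y₂), 0, x₁²+y₁²), where c = 1/√((x₁²+y₁²)(x₁²+y₁²+x₂²+y₂²)), are orthonormal under the Euclidean inner product and are both annihilated by dF₁(q) and dF₂(q), where F₁ = x₁²−y₁²+x₂²−y₂² and F₂ = 2(x₁y₁+x₂y₂). -/

import Mathlib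

open Real

private lemma fderiv_F1_apply (q w : Fin 4 → ℝ) :
    fderiv ℝ (fun x : Fin 4 → ℝ => x 0 ^ 2 - x 1 ^ 2 + x 2 ^ 2 - x 3 ^ 2) q w
    = 2 * q 0 * w 0 - 2 * q 1 * w 1 + 2 * q 2 * w 2 - 2 * q 3 * w 3 := by
  have h : ∀ i : Fin 4, HasFDerivAt (𝕜 := ℝ) (fun x : Fin 4 → ℝ => x i)
      (ContinuousLinearMap.proj i) q := fun i => hasFDerivAt_apply i q
  have hF : HasFDerivAt (𝕜 := ℝ) (fun x : Fin 4 → ℝ => x 0 ^ 2 - x 1 ^ 2 + x 2 ^ 2 - x 3 ^ 2)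
      (((q 0 • ContinuousLinearMap.proj 0 + q 0 • ContinuousLinearMap.proj 0) -
        (q 1 • ContinuousLinearMap.proj 1 + q 1 • ContinuousLinearMap.proj 1)) +
       ((q 2 • ContinuousLinearMap.proj 2 + q 2 • ContinuousLinearMap.proj 2) -
        (q 3 • ContinuousLinearMap.proj 3 + q 3 • ContinuousLinearMap.proj 3))) q := by
    have := ((((h 0).mul (h 0)).sub ((h 1).mul (h 1))).add
      (((h 2).mul (h 2)).sub ((h 3).mul (h 3))))
    refine this.congr_of_eventuallyEq (Filter.Eventually.of_forall fun x => ?_)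
    simp only [Pi.mul_apply, Pi.add_apply, Pi.sub_apply]
    ring
  rw [hF.fderiv]
  simp only [ContinuousLinearMap.add_apply, ContinuousLinearMap.sub_apply,
    ContinuousLinearMap.smul_apply, ContinuousLinearMap.proj_apply, smul_eq_mul]
  ring

private lemma fderiv_F2_apply (q w : Fin 4 → ℝ) :
    fderiv ℝ (fun x : Fin 4 → ℝ => 2 * (x 0 * x 1 + x 2 * x 3)) q w
    = 2 * (q 0 * w 1 + q 1 * w 0 + q 2 * w 3 + q 3 * w 2) := by
  have h : ∀ i : Fin 4, HasFDerivAt (𝕜 := ℝ) (fun x : Fin 4 → ℝ => x i)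
      (ContinuousLinearMap.proj i) q := fun i => hasFDerivAt_apply i q
  have hF : HasFDerivAt (𝕜 := ℝ) (fun x : Fin 4 → ℝ => 2 * (x 0 * x 1 + x 2 * x 3))
      ((2:ℝ) • ((q 0 • ContinuousLinearMap.proj 1 + q 1 • ContinuousLinearMap.proj 0) +
        (q 2 • ContinuousLinearMap.proj 3 + q 3 • ContinuousLinearMap.proj 2))) q := by
    have := (((h 0).mul (h 1)).add ((h 2).mul (h 3))).const_mul (2:ℝ)
    refine this.congr_of_eventuallyEq (Filter.Eventually.of_forall fun x => ?_)
    simp only [Pi.mul_apply, Pi.add_apply]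
  rw [hF.fderiv]
  simp only [ContinuousLinearMap.smul_apply, ContinuousLinearMap.add_apply,
    ContinuousLinearMap.proj_apply, smul_eq_mul]
  ring

/-- At any q = (x₁,y₁,x₂,y₂) with x₁²+y₁² ≠ 0, the vectors u_q and v_q are orthonormal for the
Euclidean inner product and are annihilated by dF₁(q) and dF₂(q), with
F₁ = x₁²−y₁²+x₂²−y₂² and F₂ = 2(x₁y₁+x₂y₂). -/
theorem lefschetz_orthonormal_tangent_frame (q : Fin 4 → ℝ)
    (hq : q 0 ^ 2 + q 1 ^ 2 ≠ 0) :
    let c : ℝ := 1 / Real.sqrt ((q 0 ^ 2 + q 1 ^ 2) * (q 0 ^ 2 + q 1 ^ 2 + q 2 ^ 2 + q 3 ^ 2))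
    let u : Fin 4 → ℝ := fun i =>
      c * ![-(q 0 * q 2 + q 1 * q 3), -(q 0 * q 3 - q 2 * q 1), q 0 ^ 2 + q 1 ^ 2, 0] i
    let v : Fin 4 → ℝ := fun i =>
      c * ![q 0 * q 3 - q 2 * q 1, -(q 0 * q 2 + q 1 * q 3), 0, q 0 ^ 2 + q 1 ^ 2] i
    let F₁ : (Fin 4 → ℝ) → ℝ := fun x => x 0 ^ 2 - x 1 ^ 2 + x 2 ^ 2 - x 3 ^ 2
    let F₂ : (Fin 4 → ℝ) → ℝ := fun x => 2 * (x 0 * x 1 + x 2 * x 3)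
    (∑ i, u i * u i) = 1 ∧ (∑ i, v i * v i) = 1 ∧ (∑ i, u i * v i) = 0 ∧
    fderiv ℝ F₁ q u = 0 ∧ fderiv ℝ F₂ q u = 0 ∧
    fderiv ℝ F₁ q v = 0 ∧ fderiv ℝ F₂ q v = 0 := by
  intro c u v F₁ F₂
  have hA : 0 < q 0 ^ 2 + q 1 ^ 2 := lt_of_le_of_ne (by positivity) (Ne.symm hq)
  have hP : 0 < (q 0 ^ 2 + q 1 ^ 2) * (q 0 ^ 2 + q 1 ^ 2 + q 2 ^ 2 + q 3 ^ 2) := by nlinarith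
  have hss : Real.sqrt ((q 0 ^ 2 + q 1 ^ 2) * (q 0 ^ 2 + q 1 ^ 2 + q 2 ^ 2 + q 3 ^ 2)) *
      Real.sqrt ((q 0 ^ 2 + q 1 ^ 2) * (q 0 ^ 2 + q 1 ^ 2 + q 2 ^ 2 + q 3 ^ 2)) =
      (q 0 ^ 2 + q 1 ^ 2) * (q 0 ^ 2 + q 1 ^ 2 + q 2 ^ 2 + q 3 ^ 2) :=
    Real.mul_self_sqrt hP.le
  have hsne : Real.sqrt ((q 0 ^ 2 + q 1 ^ 2) * (q 0 ^ 2 + q 1 ^ 2 + q 2 ^ 2 + q 3 ^ 2)) ≠ 0 := by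
    positivity
  have hc2 : c * c * ((q 0 ^ 2 + q 1 ^ 2) * (q 0 ^ 2 + q 1 ^ 2 + q 2 ^ 2 + q 3 ^ 2)) = 1 := by
    show 1 / _ * (1 / _) * _ = 1
    rw [div_mul_div_comm, one_mul]
    rw [div_mul_eq_mul_div, one_mul, div_eq_one_iff_eq (by positivity)]
    exact hss.symm
  have hu : ∀ i, u i = c * ![-(q 0 * q 2 + q 1 * q 3), -(q 0 * q 3 - q 2 * q 1),
      q 0 ^ 2 + q 1 ^ 2, 0] i := fun i => rfl
  have hv : ∀ i, v i = c * ![q 0 * q 3 - q 2 * q 1, -(q 0 * q 2 + q 1 * q 3), 0,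
      q 0 ^ 2 + q 1 ^ 2] i := fun i => rfl
  refine ⟨?_, ?_, ?_, ?_, ?_, ?_, ?_⟩
  · rw [Fin.sum_univ_four, hu 0, hu 1, hu 2, hu 3]
    simp only [Matrix.cons_val_zero, Matrix.cons_val_one, Matrix.head_cons,
      Matrix.cons_val_two, Matrix.tail_cons, Matrix.cons_val_three]
    linear_combination hc2
  · rw [Fin.sum_univ_four, hv 0, hv 1, hv 2, hv 3]
    simp only [Matrix.cons_val_zero, Matrix.cons_val_one, Matrix.head_cons,
      Matrix.cons_val_two, Matrix.tail_cons, Matrix.cons_val_three]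
    linear_combination hc2
  · rw [Fin.sum_univ_four, hu 0, hu 1, hu 2, hu 3, hv 0, hv 1, hv 2, hv 3]
    simp only [Matrix.cons_val_zero, Matrix.cons_val_one, Matrix.head_cons,
      Matrix.cons_val_two, Matrix.tail_cons, Matrix.cons_val_three]
    ring
  · rw [show F₁ = fun x : Fin 4 → ℝ => x 0 ^ 2 - x 1 ^ 2 + x 2 ^ 2 - x 3 ^ 2 from rfl,
      fderiv_F1_apply, hu 0, hu 1, hu 2, hu 3]
    simp only [Matrix.cons_val_zero, Matrix.cons_val_one, Matrix.head_cons,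
      Matrix.cons_val_two, Matrix.tail_cons, Matrix.cons_val_three]
    ring
  · rw [show F₂ = fun x : Fin 4 → ℝ => 2 * (x 0 * x 1 + x 2 * x 3) from rfl,
      fderiv_F2_apply, hu 0, hu 1, hu 2, hu 3]
    simp only [Matrix.cons_val_zero, Matrix.cons_val_one, Matrix.head_cons,
      Matrix.cons_val_two, Matrix.tail_cons, Matrix.cons_val_three]
    ring
  · rw [show F₁ = fun x : Fin 4 → ℝ => x 0 ^ 2 - x 1 ^ 2 + x 2 ^ 2 - x 3 ^ 2 from rfl,
      fderiv_F1_apply, hv 0, hv 1, hv 2, hv 3]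
    simp only [Matrix.cons_val_zero, Matrix.cons_val_one, Matrix.head_cons,
      Matrix.cons_val_two, Matrix.tail_cons, Matrix.cons_val_three]
    ring
  · rw [show F₂ = fun x : Fin 4 → ℝ => 2 * (x 0 * x 1 + x 2 * x 3) from rfl,
      fderiv_F2_apply, hv 0, hv 1, hv 2, hv 3]
    simp only [Matrix.cons_val_zero, Matrix.cons_val_one, Matrix.head_cons,
      Matrix.cons_val_two, Matrix.tail_cons, Matrix.cons_val_three]
    ring
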